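/- Fix integers d ≥ 2 and ℓ ≥ 0. There exists a constant c_2 > 0 such that for all sufficiently small p > 0 and all real numbers a, b with p^{−1/(d−1)} ≤ a ≤ b ≤ 2p^{−1/(d−1)}, one has g_{ℓ+1}(a^{d−1} q) − g_{ℓ+1}(b^{d−1} q) ≤ c_2 (b^{d−1} − a^{d−1}) q, where q = −log(1−p). -/

import Mathlib

open Filter

namespace Boot

noncomputable def beta (k : ℕ) (u : ℝ) : ℝ :=
  (1 - (1 - u) ^ k + Real.sqrt (1 + (4 * u - 2) * (1 - u) ^ k + (1 - u) ^ (2 * k))) / 2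

/-- `g_k(x) = -log β_k(1 - e^{-x})`. -/
noncomputable def gfun (k : ℕ) (x : ℝ) : ℝ := - Real.log (beta k (1 - Real.exp (-x)))

lemma beta_eq (k : ℕ) (u : ℝ) :
    beta k u = (1 - (1 - u) ^ k +
      Real.sqrt ((1 - (1 - u) ^ k) ^ 2 + 4 * u * (1 - u) ^ k)) / 2 := by
  have h : 1 + (4 * u - 2) * (1 - u) ^ k + (1 - u) ^ (2 * k)
      = (1 - (1 - u) ^ k) ^ 2 + 4 * u * (1 - u) ^ k := by
    rw [two_mul, pow_add]; ring
  rw [beta, h]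

lemma le_beta (k : ℕ) {u : ℝ} (hu0 : 0 ≤ u) (hu1 : u ≤ 1) : u ≤ beta k u := by
  rw [beta_eq]
  set s : ℝ := (1 - u) ^ k with hs
  have hs0 : 0 ≤ s := pow_nonneg (by linarith) k
  have hE0 : 0 ≤ (1 - s) ^ 2 + 4 * u * s := by
    nlinarith [sq_nonneg (1 - s), mul_nonneg hu0 hs0]
  have hsq := Real.sq_sqrt hE0
  have hnn := Real.sqrt_nonneg ((1 - s) ^ 2 + 4 * u * s)
  -- need sqrt E ≥ 2u - 1 + s
  rcases le_or_gt (2 * u - 1 + s) 0 with h | h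
  · linarith
  · have : 2 * u - 1 + s ≤ Real.sqrt ((1 - s) ^ 2 + 4 * u * s) := by
      rw [Real.le_sqrt' h]
      nlinarith [mul_nonneg (mul_nonneg hu0 (by linarith : (0:ℝ) ≤ 1 - u)) hs0]
    linarith

lemma pow_sub_pow_le (k : ℕ) {a b : ℝ} (hb : 0 ≤ b) (hba : b ≤ a) (ha : a ≤ 1) :
    a ^ k - b ^ k ≤ k * (a - b) := by
  induction k with
  | zero => simp
  | succ n ih =>
    have h1 : a ^ n ≤ 1 := pow_le_one₀ (hb.trans hba) ha
    have h2 : 0 ≤ b ^ n := pow_nonneg hb n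
    have h3 : b ^ n ≤ a ^ n := pow_le_pow_left₀ hb hba n
    have h4 : b ^ n ≤ 1 := pow_le_one₀ hb (hba.trans ha)
    push_cast
    rw [pow_succ a n, pow_succ b n]
    nlinarith [mul_le_mul_of_nonneg_right ha (sub_nonneg.2 h3),
      mul_le_mul_of_nonneg_left h4 (sub_nonneg.2 hba)]

set_option maxHeartbeats 1000000 in
lemma gfun_lip (k : ℕ) (hk : 1 ≤ k) {x y : ℝ} (hx : 1 ≤ x) (hxy : x ≤ y) :
    gfun k x - gfun k y ≤ (5 * (k : ℝ) + 8) * (y - x) := by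
  rw [gfun, gfun]
  have hex : Real.exp (-x) ≤ 1 / 2 := by
    have h1 : Real.exp (-x) ≤ Real.exp (-1) := Real.exp_le_exp.2 (by linarith)
    have h2 : Real.exp (-1) ≤ 1 / 2 := by
      rw [Real.exp_neg]
      rw [inv_le_comm₀ (Real.exp_pos 1) (by norm_num)]
      have := Real.exp_one_gt_d9; linarith
    linarith
  set ux : ℝ := 1 - Real.exp (-x) with hux_def
  set uy : ℝ := 1 - Real.exp (-y) with huy_def
  have hexy : Real.exp (-y) ≤ Real.exp (-x) := Real.exp_le_exp.2 (by linarith)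
  have heyp : 0 < Real.exp (-y) := Real.exp_pos _
  have hux : 1 / 2 ≤ ux := by simp only [hux_def]; linarith
  have hux1 : ux < 1 := by simp only [hux_def]; linarith [Real.exp_pos (-x)]
  have huy1 : uy < 1 := by simp only [huy_def]; linarith
  have huxy : ux ≤ uy := by simp only [hux_def, huy_def]; linarith
  have hdu : uy - ux ≤ y - x := by
    have h1 : (x - y) + 1 ≤ Real.exp (x - y) := Real.add_one_le_exp _
    have h2 : Real.exp (-x) - Real.exp (-y) = Real.exp (-x) * (1 - Real.exp (x - y)) := by
      rw [mul_sub, mul_one, ← Real.exp_add, show -x + (x - y) = -y by ring]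
    have he1 : Real.exp (x - y) ≤ 1 := by
      rw [show (1:ℝ) = Real.exp 0 from (Real.exp_zero).symm]
      exact Real.exp_le_exp.2 (by linarith)
    have h3 : Real.exp (-x) ≤ 1 := by linarith
    have h4 : Real.exp (-x) * (1 - Real.exp (x - y)) ≤ 1 * (y - x) := by
      apply mul_le_mul h3 (by linarith) (by linarith) one_pos.le
    simp only [hux_def, huy_def]; linarith
  clear_value ux uy
  set sx : ℝ := (1 - ux) ^ k with hsx_def
  set sy : ℝ := (1 - uy) ^ k with hsy_def
  have hsx0 : 0 ≤ sx := pow_nonneg (by linarith) k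
  have hsy0 : 0 ≤ sy := pow_nonneg (by linarith) k
  have hsyx : sy ≤ sx := pow_le_pow_left₀ (by linarith) (by linarith) k
  have hsx_half : sx ≤ 1 / 2 := by
    have h1 : sx ≤ (1/2 : ℝ) ^ k := pow_le_pow_left₀ (by linarith) (by linarith) k
    have h2 : (1/2 : ℝ) ^ k ≤ (1/2 : ℝ) ^ 1 := pow_le_pow_of_le_one (by norm_num) (by norm_num) hk
    simpa using h1.trans h2
  have hsub : sx - sy ≤ (k : ℝ) * (uy - ux) := by
    have := pow_sub_pow_le k (b := 1 - uy) (a := 1 - ux) (by linarith) (by linarith) (by linarith)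
    calc sx - sy ≤ (k : ℝ) * ((1 - ux) - (1 - uy)) := this
      _ = (k : ℝ) * (uy - ux) := by ring
  clear_value sx sy
  set Ex : ℝ := (1 - sx) ^ 2 + 4 * ux * sx with hEx_def
  set Ey : ℝ := (1 - sy) ^ 2 + 4 * uy * sy with hEy_def
  clear_value Ex Ey
  have hEx0 : 0 ≤ Ex := by
    have := mul_nonneg (by linarith : (0:ℝ) ≤ ux) hsx0
    nlinarith [sq_nonneg (1 - sx)]
  have hEy0 : 0 ≤ Ey := by
    have := mul_nonneg (by linarith : (0:ℝ) ≤ uy) hsy0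
    nlinarith [sq_nonneg (1 - sy)]
  have hsqx := Real.sq_sqrt hEx0
  have hsqy := Real.sq_sqrt hEy0
  have hnx := Real.sqrt_nonneg Ex
  have hny := Real.sqrt_nonneg Ey
  have hsqrtEx : 1 / 2 ≤ Real.sqrt Ex := by
    rw [Real.le_sqrt' (by norm_num)]
    nlinarith [mul_nonneg (by linarith : (0:ℝ) ≤ ux) hsx0]
  have hEdiff : Ey - Ex ≤ (2 * (k : ℝ) + 4) * (uy - ux) := by
    have e1 : Ey - Ex = (sx - sy) * (2 - sx - sy) + 4 * (uy * (sy - sx) + (uy - ux) * sx) := by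
      simp only [hEx_def, hEy_def]; ring
    have e2 : (sx - sy) * (2 - sx - sy) ≤ (sx - sy) * 2 :=
      mul_le_mul_of_nonneg_left (by linarith) (by linarith)
    have e3 : uy * (sy - sx) ≤ 0 := mul_nonpos_of_nonneg_of_nonpos (by linarith) (by linarith)
    have e4 : (uy - ux) * sx ≤ (uy - ux) * 1 :=
      mul_le_mul_of_nonneg_left (by linarith) (by linarith)
    linarith [hsub]
  have hsqrt_diff : Real.sqrt Ey - Real.sqrt Ex ≤ (4 * (k : ℝ) + 8) * (uy - ux) := by
    have hk0 : (0:ℝ) ≤ 4 * (k:ℝ) + 8 := by positivity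
    rcases le_or_gt Ey Ex with h | h
    · have h1 := Real.sqrt_le_sqrt h
      have h2 := mul_nonneg hk0 (by linarith : (0:ℝ) ≤ uy - ux)
      linarith
    · have hmono := Real.sqrt_le_sqrt h.le
      have hD : 0 ≤ Real.sqrt Ey - Real.sqrt Ex := by linarith
      have hS : 1 / 2 ≤ Real.sqrt Ey + Real.sqrt Ex := by linarith
      have hid : (Real.sqrt Ey - Real.sqrt Ex) * (Real.sqrt Ey + Real.sqrt Ex)
          = Ey - Ex := by
        have h0 : (Real.sqrt Ey - Real.sqrt Ex) * (Real.sqrt Ey + Real.sqrt Ex)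
            = Real.sqrt Ey ^ 2 - Real.sqrt Ex ^ 2 := by ring
        rw [h0, hsqx, hsqy]
      have h5 : (Real.sqrt Ey - Real.sqrt Ex) * (1 / 2)
          ≤ (Real.sqrt Ey - Real.sqrt Ex) * (Real.sqrt Ey + Real.sqrt Ex) :=
        mul_le_mul_of_nonneg_left hS hD
      linarith
  -- beta values
  have hbx : beta k ux = (1 - sx + Real.sqrt Ex) / 2 := by rw [beta_eq, hEx_def, hsx_def]
  have hby : beta k uy = (1 - sy + Real.sqrt Ey) / 2 := by rw [beta_eq, hEy_def, hsy_def]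
  have hbetax : 1 / 2 ≤ beta k ux := le_trans hux (le_beta k (by linarith) hux1.le)
  have hbetay : 1 / 2 ≤ beta k uy := le_trans (by linarith) (le_beta k (by linarith) huy1.le)
  have hbdiff : beta k uy - beta k ux ≤ ((5 * (k : ℝ) + 8) / 2) * (uy - ux) := by
    rw [hbx, hby]
    have hid2 : (1 - sy + Real.sqrt Ey) / 2 - (1 - sx + Real.sqrt Ex) / 2
        = ((sx - sy) + (Real.sqrt Ey - Real.sqrt Ex)) / 2 := by ring
    have h6 : (sx - sy) + (Real.sqrt Ey - Real.sqrt Ex)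
        ≤ (↑k * (uy - ux)) + ((4 * (k:ℝ) + 8) * (uy - ux)) := add_le_add hsub hsqrt_diff
    have h7 : (↑k * (uy - ux)) + ((4 * (k:ℝ) + 8) * (uy - ux)) = (5 * (k:ℝ) + 8) * (uy - ux) := by
      ring
    linarith
  have hrhs0 : 0 ≤ (5 * (k : ℝ) + 8) * (y - x) := by
    apply mul_nonneg (by positivity) (by linarith)
  rcases le_or_gt (beta k uy) (beta k ux) with h | h
  · have := Real.log_le_log (by linarith) h
    linarith
  · have hlog : Real.log (beta k uy) - Real.log (beta k ux)
        ≤ (beta k uy - beta k ux) / beta k ux := by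
      rw [← Real.log_div (by linarith) (by linarith)]
      have h1 := Real.log_le_sub_one_of_pos
        (show 0 < beta k uy / beta k ux by positivity)
      have h2 : beta k uy / beta k ux - 1 = (beta k uy - beta k ux) / beta k ux := by
        field_simp
      linarith
    have h3 : (beta k uy - beta k ux) / beta k ux ≤ 2 * (beta k uy - beta k ux) := by
      rw [div_le_iff₀ (by linarith)]
      nlinarith
    have h4 : (5 * (k : ℝ) + 8) * (uy - ux) ≤ (5 * (k : ℝ) + 8) * (y - x) := by
      apply mul_le_mul_of_nonneg_left hdu (by positivity)
    linarith

/-- **Lemma (Statement 18).** Fix `d ≥ 2` and `ℓ ≥ 0`. There is a constant `c₂ > 0` such that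
for all sufficiently small `p > 0` and all reals `a, b` with
`p^{−1/(d−1)} ≤ a ≤ b ≤ 2p^{−1/(d−1)}`,
`g_{ℓ+1}(a^{d−1} q) − g_{ℓ+1}(b^{d−1} q) ≤ c₂ (b^{d−1} − a^{d−1}) q` where `q = −log(1−p)`. -/
theorem gfun_decrement (d ℓ : ℕ) (hd : 2 ≤ d) :
    ∃ c2 : ℝ, 0 < c2 ∧ ∃ p0 : ℝ, 0 < p0 ∧ ∀ p : ℝ, 0 < p → p ≤ p0 →
      ∀ a b : ℝ, p ^ (-(1 : ℝ) / ((d : ℝ) - 1)) ≤ a → a ≤ b →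
        b ≤ 2 * p ^ (-(1 : ℝ) / ((d : ℝ) - 1)) →
        gfun (ℓ + 1) (a ^ (d - 1) * (-Real.log (1 - p))) -
            gfun (ℓ + 1) (b ^ (d - 1) * (-Real.log (1 - p)))
          ≤ c2 * (b ^ (d - 1) - a ^ (d - 1)) * (-Real.log (1 - p)) := by
  refine ⟨5 * ((ℓ : ℝ) + 1) + 8, by positivity, 1/2, by norm_num, ?_⟩
  intro p hp hp2 a b hpa hab hb2
  set q : ℝ := -Real.log (1 - p) with hq_def
  have h1p : 0 < 1 - p := by linarith
  have hq : p ≤ q := by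
    have := Real.log_le_sub_one_of_pos h1p
    simp only [hq_def]; linarith
  have hq0 : 0 < q := lt_of_lt_of_le hp hq
  have hcd : (0:ℝ) < (d : ℝ) - 1 := by
    have : (2:ℝ) ≤ (d:ℝ) := by exact_mod_cast hd
    linarith
  have hrp : 0 < p ^ (-(1 : ℝ) / ((d : ℝ) - 1)) := Real.rpow_pos_of_pos hp _
  have ha0 : 0 < a := lt_of_lt_of_le hrp hpa
  -- (p ^ (-1/(d-1)))^(d-1) = p⁻¹
  have hcast : ((d - 1 : ℕ) : ℝ) = (d : ℝ) - 1 := by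
    have : 1 ≤ d := le_trans (by norm_num) hd
    push_cast [Nat.cast_sub this]; ring
  have hkey : (p ^ (-(1 : ℝ) / ((d : ℝ) - 1))) ^ (d - 1) = p⁻¹ := by
    rw [← Real.rpow_natCast (p ^ (-(1 : ℝ) / ((d : ℝ) - 1))) (d - 1),
      ← Real.rpow_mul hp.le, hcast]
    rw [show -(1 : ℝ) / ((d : ℝ) - 1) * ((d : ℝ) - 1) = -1 by
      field_simp]
    exact Real.rpow_neg_one p
  have hax : p⁻¹ ≤ a ^ (d - 1) := by
    rw [← hkey]; exact pow_le_pow_left₀ hrp.le hpa _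
  have habx : a ^ (d - 1) ≤ b ^ (d - 1) := pow_le_pow_left₀ ha0.le hab _
  have hx1 : 1 ≤ a ^ (d - 1) * q := by
    calc (1:ℝ) = p⁻¹ * p := by field_simp
      _ ≤ a ^ (d - 1) * q := by
        apply mul_le_mul hax hq hp.le (le_trans (by positivity) hax)
  have hxy : a ^ (d - 1) * q ≤ b ^ (d - 1) * q :=
    mul_le_mul_of_nonneg_right habx hq0.le
  have := gfun_lip (ℓ + 1) (by omega) hx1 hxy
  calc gfun (ℓ + 1) (a ^ (d - 1) * q) - gfun (ℓ + 1) (b ^ (d - 1) * q)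
      ≤ (5 * ((ℓ + 1 : ℕ) : ℝ) + 8) * (b ^ (d - 1) * q - a ^ (d - 1) * q) := this
    _ = (5 * ((ℓ : ℝ) + 1) + 8) * (b ^ (d - 1) - a ^ (d - 1)) * q := by
        push_cast; ring

end Boot
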